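/- Resolvent kernel identity: let λ ∈ ℂ and let v₁, v₂ : ℤ → ℂ² satisfy v_j(x+1) = T_λ(x)·v_j(x) for all x ∈ ℤ, and suppose W := det(v₁(0) | v₂(0)) ≠ 0. Define the 2×2 matrix K_λ(x,y) := e^{−iλ}·W⁻¹·( v₂(x)·v₁(y)ᵀ·[[0, χ(x<y)], [χ(x≤y), 0]] + v₁(x)·v₂(y)ᵀ·[[0, χ(x≥y)], [χ(x>y), 0]] ), where χ(P) = 1 if P holds and 0 otherwise and v·wᵀ denotes the outer product of column vectors. Then for every y ∈ ℤ and every c ∈ ℂ², setting w(x) = K_λ(x,y)·c and f := J⁻¹w (i.e. f(x) = (w₂(x), w₁(x+1))), one has (J(Uf − e^{iλ}f))(x) = c if x = y and (J(Uf − e^{iλ}f))(x) = 0 if x ≠ y. -/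

import Mathlib

open Complex

/-- Resolvent kernel identity: if `v₁, v₂` solve the transfer-matrix recursion with
nonvanishing Wronskian `W`, then the kernel `K_λ(x,y)` built from them inverts
`U − e^{iλ}` in the sense that `(J((U − e^{iλ})(J⁻¹ K_λ(·,y)c)))(x) = δ_{xy} c`. -/
theorem resolvent_kernel_identity
    (α : ℤ → ℂ) (h01 : ∀ x : ℤ, 0 < ‖α x‖) (h02 : ∀ x : ℤ, ‖α x‖ < 1)
    (ρ : ℤ → ℝ) (hρ : ∀ x : ℤ, ρ x = Real.sqrt (1 - ‖α x‖ ^ 2))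
    (lam : ℂ) (v₁ v₂ : ℤ → ℂ × ℂ)
    (hv₁ : ∀ x : ℤ, v₁ (x + 1)
      = ((ρ x : ℂ)⁻¹ * (Complex.exp (Complex.I * lam) * (v₁ x).1 + α x * (v₁ x).2),
          (ρ x : ℂ)⁻¹ * ((starRingEnd ℂ) (α x) * (v₁ x).1
            + Complex.exp (-(Complex.I * lam)) * (v₁ x).2)))
    (hv₂ : ∀ x : ℤ, v₂ (x + 1)
      = ((ρ x : ℂ)⁻¹ * (Complex.exp (Complex.I * lam) * (v₂ x).1 + α x * (v₂ x).2),
          (ρ x : ℂ)⁻¹ * ((starRingEnd ℂ) (α x) * (v₂ x).1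
            + Complex.exp (-(Complex.I * lam)) * (v₂ x).2)))
    (W : ℂ) (hW : W = (v₁ 0).1 * (v₂ 0).2 - (v₁ 0).2 * (v₂ 0).1) (hW0 : W ≠ 0)
    (y : ℤ) (c : ℂ × ℂ)
    -- `w x = K_λ(x,y) c`, written out entrywise
    (w : ℤ → ℂ × ℂ)
    (hw : ∀ x : ℤ, w x
      = (Complex.exp (-(Complex.I * lam)) * W⁻¹) •
          ((((v₁ y).1 * (if x < y then (1 : ℂ) else 0) * c.2
              + (v₁ y).2 * (if x ≤ y then (1 : ℂ) else 0) * c.1) • v₂ x)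
            + (((v₂ y).1 * (if y ≤ x then (1 : ℂ) else 0) * c.2
              + (v₂ y).2 * (if y < x then (1 : ℂ) else 0) * c.1) • v₁ x)))
    -- `f = J⁻¹ w`
    (f : ℤ → ℂ × ℂ) (hf : ∀ x : ℤ, f x = ((w x).2, (w (x + 1)).1))
    -- `g = U f − e^{iλ} f`
    (g : ℤ → ℂ × ℂ)
    (hg : ∀ x : ℤ, g x
      = ((ρ (x - 1) : ℂ) * (f (x - 1)).1 + (starRingEnd ℂ) (α (x - 1)) * (f (x - 1)).2
            - Complex.exp (Complex.I * lam) * (f x).1,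
          -(α (x + 1)) * (f (x + 1)).1 + (ρ (x + 1) : ℂ) * (f (x + 1)).2
            - Complex.exp (Complex.I * lam) * (f x).2)) :
    ∀ x : ℤ, (((g (x - 1)).2, (g x).1) : ℂ × ℂ) = if x = y then c else 0 := by
  intro x
  set e := Complex.exp (Complex.I * lam) with he
  have hρpos : ∀ z : ℤ, 0 < ρ z := by
    intro z; rw [hρ]
    apply Real.sqrt_pos.mpr
    nlinarith [h02 z, norm_nonneg (α z)]
  have hρ0 : ∀ z : ℤ, (ρ z : ℂ) ≠ 0 := by
    intro z; exact_mod_cast (hρpos z).ne'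
  have hρsq : ∀ z : ℤ, (ρ z : ℂ) ^ 2 = 1 - α z * (starRingEnd ℂ) (α z) := by
    intro z
    have h1 : (ρ z : ℝ) ^ 2 = 1 - ‖α z‖ ^ 2 := by
      rw [hρ, Real.sq_sqrt]; nlinarith [h02 z, norm_nonneg (α z)]
    have h2 : α z * (starRingEnd ℂ) (α z) = (‖α z‖ : ℂ) ^ 2 := by
      rw [Complex.mul_conj]; norm_cast; rw [Complex.normSq_eq_norm_sq]
    rw [h2]
    calc (ρ z : ℂ) ^ 2 = ((ρ z ^ 2 : ℝ) : ℂ) := by push_cast; ring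
    _ = ((1 - ‖α z‖ ^ 2 : ℝ) : ℂ) := by rw [h1]
    _ = 1 - (‖α z‖ : ℂ) ^ 2 := by push_cast; ring
  have hee : Complex.exp (-(Complex.I * lam)) * e = 1 := by
    rw [he, ← Complex.exp_add]; simp
  have hWi : W⁻¹ * W = 1 := inv_mul_cancel₀ hW0
  have hA1 : ∀ z : ℤ, (ρ z : ℂ) * (v₁ (z + 1)).1 = e * (v₁ z).1 + α z * (v₁ z).2 := by
    intro z; rw [hv₁ z]; field_simp [hρ0 z]
  have hB1 : ∀ z : ℤ, (ρ z : ℂ) * (v₂ (z + 1)).1 = e * (v₂ z).1 + α z * (v₂ z).2 := by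
    intro z; rw [hv₂ z]; field_simp [hρ0 z]
  have hD1 : ∀ z : ℤ, (ρ (z - 1) : ℂ) * (v₁ (z - 1)).2
      = e * (v₁ z).2 - (starRingEnd ℂ) (α (z - 1)) * (v₁ z).1 := by
    intro z
    have h := hv₁ (z - 1); rw [Int.sub_add_cancel] at h
    rw [h]; field_simp [hρ0 (z-1)]
    linear_combination (v₁ (z-1)).2 * hρsq (z-1) - (v₁ (z-1)).2 * hee
  have hD2 : ∀ z : ℤ, (ρ (z - 1) : ℂ) * (v₂ (z - 1)).2
      = e * (v₂ z).2 - (starRingEnd ℂ) (α (z - 1)) * (v₂ z).1 := by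
    intro z
    have h := hv₂ (z - 1); rw [Int.sub_add_cancel] at h
    rw [h]; field_simp [hρ0 (z-1)]
    linear_combination (v₂ (z-1)).2 * hρsq (z-1) - (v₂ (z-1)).2 * hee
  have hstep : ∀ z : ℤ, (v₁ (z+1)).1 * (v₂ (z+1)).2 - (v₁ (z+1)).2 * (v₂ (z+1)).1
      = (v₁ z).1 * (v₂ z).2 - (v₁ z).2 * (v₂ z).1 := by
    intro z; rw [hv₁ z, hv₂ z]; field_simp [hρ0 z]
    linear_combination -((v₁ z).1 * (v₂ z).2 - (v₁ z).2 * (v₂ z).1) * hρsq z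
      + ((v₁ z).1 * (v₂ z).2 - (v₁ z).2 * (v₂ z).1) * hee
  have hWron : ∀ z : ℤ, (v₁ z).1 * (v₂ z).2 - (v₁ z).2 * (v₂ z).1 = W := by
    intro z
    induction z using Int.induction_on with
    | zero => exact hW.symm
    | succ i ih => rw [hstep]; exact ih
    | pred i ih =>
      have h := hstep (-(i:ℤ) - 1)
      rw [show (-(i:ℤ) - 1 + 1) = -(i:ℤ) by ring] at h
      exact h.symm.trans ih
  have Hg2 : ∀ z : ℤ, (g (z - 1)).2
      = -(α z) * (w z).2 + (ρ z : ℂ) * (w (z + 1)).1 - e * (w z).1 := by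
    intro z
    simp only [hg, hf, Int.sub_add_cancel]
  have Hg1 : ∀ z : ℤ, (g z).1
      = (ρ (z - 1) : ℂ) * (w (z - 1)).2 + (starRingEnd ℂ) (α (z - 1)) * (w z).1 - e * (w z).2 := by
    intro z
    simp only [hg, hf, Int.sub_add_cancel]

  rcases lt_trichotomy x y with hxy | hxy | hxy
  · -- x < y
    rcases eq_or_lt_of_le (by omega : x + 1 ≤ y) with hx1 | hx1
    · -- x + 1 = y
      have h1 : (g (x - 1)).2 = 0 := by
        rw [Hg2 x, hw x, hw (x + 1)]
        rw [if_pos (show x < y by omega), if_pos (show x ≤ y by omega),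
          if_neg (show ¬ y ≤ x by omega), if_neg (show ¬ y < x by omega),
          if_neg (show ¬ x + 1 < y by omega), if_pos (show x + 1 ≤ y by omega),
          if_pos (show y ≤ x + 1 by omega), if_neg (show ¬ y < x + 1 by omega)]
        simp only [Prod.smul_fst, Prod.smul_snd, Prod.fst_add, Prod.snd_add, smul_eq_mul]
        rw [hx1]
        have hb := hB1 x; rw [hx1] at hb
        linear_combination (Complex.exp (-(Complex.I * lam)) * W⁻¹
          * ((v₁ y).1 * c.2 + (v₁ y).2 * c.1)) * hb
      have h2 : (g x).1 = 0 := by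
        rw [Hg1 x, hw (x - 1), hw x]
        rw [if_pos (show x < y by omega), if_pos (show x ≤ y by omega),
          if_neg (show ¬ y ≤ x by omega), if_neg (show ¬ y < x by omega),
          if_pos (show x - 1 < y by omega), if_pos (show x - 1 ≤ y by omega),
          if_neg (show ¬ y ≤ x - 1 by omega), if_neg (show ¬ y < x - 1 by omega)]
        simp only [Prod.smul_fst, Prod.smul_snd, Prod.fst_add, Prod.snd_add, smul_eq_mul]
        linear_combination (Complex.exp (-(Complex.I * lam)) * W⁻¹
          * ((v₁ y).1 * c.2 + (v₁ y).2 * c.1)) * hD2 x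
      rw [if_neg (show ¬ x = y by omega), h1, h2]; rfl
    · -- x + 1 < y
      have h1 : (g (x - 1)).2 = 0 := by
        rw [Hg2 x, hw x, hw (x + 1)]
        rw [if_pos (show x < y by omega), if_pos (show x ≤ y by omega),
          if_neg (show ¬ y ≤ x by omega), if_neg (show ¬ y < x by omega),
          if_pos (show x + 1 < y by omega), if_pos (show x + 1 ≤ y by omega),
          if_neg (show ¬ y ≤ x + 1 by omega), if_neg (show ¬ y < x + 1 by omega)]
        simp only [Prod.smul_fst, Prod.smul_snd, Prod.fst_add, Prod.snd_add, smul_eq_mul]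
        linear_combination (Complex.exp (-(Complex.I * lam)) * W⁻¹
          * ((v₁ y).1 * c.2 + (v₁ y).2 * c.1)) * hB1 x
      have h2 : (g x).1 = 0 := by
        rw [Hg1 x, hw (x - 1), hw x]
        rw [if_pos (show x < y by omega), if_pos (show x ≤ y by omega),
          if_neg (show ¬ y ≤ x by omega), if_neg (show ¬ y < x by omega),
          if_pos (show x - 1 < y by omega), if_pos (show x - 1 ≤ y by omega),
          if_neg (show ¬ y ≤ x - 1 by omega), if_neg (show ¬ y < x - 1 by omega)]
        simp only [Prod.smul_fst, Prod.smul_snd, Prod.fst_add, Prod.snd_add, smul_eq_mul]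
        linear_combination (Complex.exp (-(Complex.I * lam)) * W⁻¹
          * ((v₁ y).1 * c.2 + (v₁ y).2 * c.1)) * hD2 x
      rw [if_neg (show ¬ x = y by omega), h1, h2]; rfl
  · -- x = y
    subst hxy
    have h1 : (g (x - 1)).2 = c.1 := by
      rw [Hg2 x, hw x, hw (x + 1)]
      rw [if_neg (show ¬ x < x by omega), if_pos (show x ≤ x by omega),
        if_neg (show ¬ x + 1 < x by omega), if_neg (show ¬ x + 1 ≤ x by omega),
        if_pos (show x ≤ x + 1 by omega), if_pos (show x < x + 1 by omega)]
      simp only [Prod.smul_fst, Prod.smul_snd, Prod.fst_add, Prod.snd_add, smul_eq_mul]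
      linear_combination (Complex.exp (-(Complex.I * lam)) * W⁻¹
          * ((v₂ x).1 * c.2 + (v₂ x).2 * c.1)) * hA1 x
        + (Complex.exp (-(Complex.I * lam)) * W⁻¹ * c.1 * e) * hWron x
        + (c.1 * W⁻¹ * W) * hee + c.1 * hWi
    have h2 : (g x).1 = c.2 := by
      rw [Hg1 x, hw (x - 1), hw x]
      rw [if_neg (show ¬ x < x by omega), if_pos (show x ≤ x by omega),
        if_pos (show x - 1 < x by omega), if_pos (show x - 1 ≤ x by omega),
        if_neg (show ¬ x ≤ x - 1 by omega), if_neg (show ¬ x < x - 1 by omega)]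
      simp only [Prod.smul_fst, Prod.smul_snd, Prod.fst_add, Prod.snd_add, smul_eq_mul]
      linear_combination (Complex.exp (-(Complex.I * lam)) * W⁻¹
          * ((v₁ x).1 * c.2 + (v₁ x).2 * c.1)) * hD2 x
        + (Complex.exp (-(Complex.I * lam)) * W⁻¹ * c.2 * e) * hWron x
        + (c.2 * W⁻¹ * W) * hee + c.2 * hWi
    rw [if_pos rfl, h1, h2]
  · -- y < x
    rcases eq_or_lt_of_le (by omega : y + 1 ≤ x) with hx1 | hx1
    · -- y + 1 = x
      have h1 : (g (x - 1)).2 = 0 := by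
        rw [Hg2 x, hw x, hw (x + 1)]
        rw [if_neg (show ¬ x < y by omega), if_neg (show ¬ x ≤ y by omega),
          if_pos (show y ≤ x by omega), if_pos (show y < x by omega),
          if_neg (show ¬ x + 1 < y by omega), if_neg (show ¬ x + 1 ≤ y by omega),
          if_pos (show y ≤ x + 1 by omega), if_pos (show y < x + 1 by omega)]
        simp only [Prod.smul_fst, Prod.smul_snd, Prod.fst_add, Prod.snd_add, smul_eq_mul]
        linear_combination (Complex.exp (-(Complex.I * lam)) * W⁻¹
          * ((v₂ y).1 * c.2 + (v₂ y).2 * c.1)) * hA1 x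
      have h2 : (g x).1 = 0 := by
        rw [Hg1 x, hw (x - 1), hw x]
        rw [if_neg (show ¬ x < y by omega), if_neg (show ¬ x ≤ y by omega),
          if_pos (show y ≤ x by omega), if_pos (show y < x by omega),
          if_neg (show ¬ x - 1 < y by omega), if_pos (show x - 1 ≤ y by omega),
          if_pos (show y ≤ x - 1 by omega), if_neg (show ¬ y < x - 1 by omega)]
        simp only [Prod.smul_fst, Prod.smul_snd, Prod.fst_add, Prod.snd_add, smul_eq_mul]
        have hd := hD1 x
        rw [show x - 1 = y by omega] at hd ⊢
        linear_combination (Complex.exp (-(Complex.I * lam)) * W⁻¹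
          * ((v₂ y).1 * c.2 + (v₂ y).2 * c.1)) * hd
      rw [if_neg (show ¬ x = y by omega), h1, h2]; rfl
    · -- y + 1 < x
      have h1 : (g (x - 1)).2 = 0 := by
        rw [Hg2 x, hw x, hw (x + 1)]
        rw [if_neg (show ¬ x < y by omega), if_neg (show ¬ x ≤ y by omega),
          if_pos (show y ≤ x by omega), if_pos (show y < x by omega),
          if_neg (show ¬ x + 1 < y by omega), if_neg (show ¬ x + 1 ≤ y by omega),
          if_pos (show y ≤ x + 1 by omega), if_pos (show y < x + 1 by omega)]
        simp only [Prod.smul_fst, Prod.smul_snd, Prod.fst_add, Prod.snd_add, smul_eq_mul]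
        linear_combination (Complex.exp (-(Complex.I * lam)) * W⁻¹
          * ((v₂ y).1 * c.2 + (v₂ y).2 * c.1)) * hA1 x
      have h2 : (g x).1 = 0 := by
        rw [Hg1 x, hw (x - 1), hw x]
        rw [if_neg (show ¬ x < y by omega), if_neg (show ¬ x ≤ y by omega),
          if_pos (show y ≤ x by omega), if_pos (show y < x by omega),
          if_neg (show ¬ x - 1 < y by omega), if_neg (show ¬ x - 1 ≤ y by omega),
          if_pos (show y ≤ x - 1 by omega), if_pos (show y < x - 1 by omega)]
        simp only [Prod.smul_fst, Prod.smul_snd, Prod.fst_add, Prod.snd_add, smul_eq_mul]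
        linear_combination (Complex.exp (-(Complex.I * lam)) * W⁻¹
          * ((v₂ y).1 * c.2 + (v₂ y).2 * c.1)) * hD1 x
      rw [if_neg (show ¬ x = y by omega), h1, h2]; rfl
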